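/- Let N, N₂ ∈ ℕ and α := 1/N₂. Let Q be a probability distribution on a finite set of N points in ℝⁿ such that Q(u) is an integer multiple of α for every point u in its support. Let (x, x̂) be jointly distributed, where x ~ Q and x̂ takes values in a countable subset of ℝⁿ, satisfying Pr[ ‖x − x̂‖ ≤ ε ] ≥ 1 − δ. Then for all τ ∈ (0,1): τ(1 − δ) · log cov_{2ε, τ + δ}(Q) ≤ I(x; x̂) + 2. -/

import Mathlib

open MeasureTheory ProbabilityTheory ENNReal
open scoped NNReal

noncomputable section

/-- `ℝⁿ` with the `ℓ₂` norm. -/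
abbrev EucSp (n : ℕ) : Type := EuclideanSpace ℝ (Fin n)

/-- `m × n` real matrices, as functions (so that the product measurable structure is found). -/
abbrev MatR (m n : ℕ) : Type := Fin m → Fin n → ℝ

/-- The `(η, δ)`-approximate covering number of a measure `R` on `ℝⁿ`: the least number of
closed `ℓ₂`-balls of radius `η` whose union has `R`-mass at least `1 - δ`. -/
def covNum {n : ℕ} (R : Measure (EucSp n)) (η δ : ℝ) : ℕ :=
  sInf {k : ℕ | ∃ s : Finset (EucSp n), s.card = k ∧
    ENNReal.ofReal (1 - δ) ≤ R (⋃ x ∈ s, Metric.closedBall x η)}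

/-- `γ` is a coupling of `μ` and `ν`. -/
def IsCoupling {α : Type*} [MeasurableSpace α] (γ : Measure (α × α)) (μ ν : Measure α) : Prop :=
  γ.map Prod.fst = μ ∧ γ.map Prod.snd = ν

/-- Wasserstein-`p` distance. -/
def wassDist {α : Type*} [MeasurableSpace α] [NormedAddCommGroup α]
    (p : ℝ) (μ ν : Measure α) : ℝ≥0∞ :=
  ⨅ γ ∈ {γ : Measure (α × α) | IsCoupling γ μ ν},
    (∫⁻ z, ENNReal.ofReal (‖z.1 - z.2‖ ^ p) ∂γ) ^ (1 / p)

/-- Wasserstein-`∞` distance. -/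
def wassInf {α : Type*} [MeasurableSpace α] [NormedAddCommGroup α]
    (μ ν : Measure α) : ℝ≥0∞ :=
  ⨅ γ ∈ {γ : Measure (α × α) | IsCoupling γ μ ν},
    essSup (fun z => ENNReal.ofReal ‖z.1 - z.2‖) γ

/-- Total variation distance between two measures. -/
def tvDist {α : Type*} [MeasurableSpace α] (μ ν : Measure α) : ℝ :=
  ⨆ s : {s : Set α // MeasurableSet s}, ((μ s.1).toReal - (ν s.1).toReal)

open Classical in
/-- Kullback-Leibler divergence (natural log), `∞` if not absolutely continuous/integrable. -/
def klDivE {α : Type*} [MeasurableSpace α] (μ ν : Measure α) : ℝ≥0∞ :=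
  if μ ≪ ν ∧ Integrable (fun x => Real.log (μ.rnDeriv ν x).toReal) μ
  then ENNReal.ofReal (∫ x, Real.log (μ.rnDeriv ν x).toReal ∂μ) else ⊤

/-- Shannon mutual information (in nats) between the two coordinates of a joint law. -/
def mutualInfoE {α β : Type*} [MeasurableSpace α] [MeasurableSpace β]
    (μ : Measure (α × β)) : ℝ≥0∞ :=
  klDivE μ ((μ.map Prod.fst).prod (μ.map Prod.snd))

/-- Mutual information in bits. -/
def mutualInfoBits {α β : Type*} [MeasurableSpace α] [MeasurableSpace β]
    (μ : Measure (α × β)) : ℝ≥0∞ :=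
  mutualInfoE μ / ENNReal.ofReal (Real.log 2)

/-- Standard product Gaussian `N(0, v I_m)` on `ℝᵐ` (with the `ℓ₂` structure). -/
def gaussianVec (m : ℕ) (v : ℝ≥0) : Measure (EucSp m) :=
  (Measure.pi fun _ : Fin m => gaussianReal 0 v).map
    (⇑(EuclideanSpace.equiv (Fin m) ℝ).symm)

/-- Law of an `m × n` random matrix with i.i.d. `N(0, 1/m)` entries. -/
def gaussMatrix (m n : ℕ) : Measure (MatR m n) :=
  Measure.pi fun _ : Fin m => Measure.pi fun _ : Fin n => gaussianReal 0 ((m : ℝ≥0)⁻¹)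

/-- Apply a matrix to a vector of `ℝⁿ`, landing in `ℝᵐ` (`ℓ₂` structure on both sides). -/
def applyMat {m n : ℕ} (A : MatR m n) (x : EucSp n) : EucSp m :=
  (EuclideanSpace.equiv (Fin m) ℝ).symm
    (fun i => ∑ j, A i j * (EuclideanSpace.equiv (Fin n) ℝ) x j)

/-- Maximum `ℓ₂` norm of a row of `A`. -/
def maxRowNorm {m n : ℕ} (A : MatR m n) : ℝ :=
  ⨆ i : Fin m, Real.sqrt (∑ j, (A i j) ^ 2)

/-- Joint law of `(x⋆, y)` where `x⋆ ∼ P` and `y = A x⋆ + ξ`,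
`ξ ∼ N(0, (σ²/m) I_m)` independent of `x⋆`. -/
def jointXY {m n : ℕ} (P : Measure (EucSp n)) (A : MatR m n)
    (σ : ℝ) : Measure (EucSp n × EucSp m) :=
  (P.prod (gaussianVec m (Real.toNNReal (σ ^ 2 / m)))).map
    (fun p => (p.1, applyMat A p.1 + p.2))

/-- Joint law of `(y, x⋆)`. -/
def jointYX {m n : ℕ} (P : Measure (EucSp n)) (A : MatR m n)
    (σ : ℝ) : Measure (EucSp m × EucSp n) :=
  (jointXY P A σ).map Prod.swap

/-- Law of the observation `y` alone. -/
def obsDist {m n : ℕ} (P : Measure (EucSp n)) (A : MatR m n)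
    (σ : ℝ) : Measure (EucSp m) :=
  (jointXY P A σ).map Prod.snd

/-- `κ` is (a version of) the posterior/conditional distribution of the second coordinate given
the first, for the joint law `ρ`.  Sampling from `κ y` is posterior sampling. -/
def IsPosterior {α β : Type*} [MeasurableSpace α] [MeasurableSpace β]
    (ρ : Measure (α × β)) (κ : Kernel α β) : Prop :=
  IsMarkovKernel κ ∧ ∀ s t : Set _, MeasurableSet s → MeasurableSet t →
    ρ (s ×ˢ t) = ∫⁻ y in s, κ y t ∂(ρ.map Prod.fst)



section AuxLemmas


lemma log_ge_one_sub_inv {x : ℝ} (hx : 0 < x) : 1 - x⁻¹ ≤ Real.log x := by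
  have h := Real.log_le_sub_one_of_pos (inv_pos.mpr hx)
  rw [Real.log_inv] at h
  linarith

lemma setIntegral_log_rnDeriv_ge {α : Type*} [MeasurableSpace α]
    (μ ν : Measure α) [IsFiniteMeasure μ] [IsFiniteMeasure ν]
    (hμν : μ ≪ ν)
    (hint : Integrable (fun x => Real.log (μ.rnDeriv ν x).toReal) μ)
    {A : Set α} (hA : MeasurableSet A) :
    (μ A).toReal * Real.log ((μ A).toReal / (ν A).toReal)
      ≤ ∫ x in A, Real.log (μ.rnDeriv ν x).toReal ∂μ := by
  set f := μ.rnDeriv ν with hf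
  have hfmeas : Measurable f := Measure.measurable_rnDeriv μ ν
  rcases eq_or_ne (μ A) 0 with hA0 | hA0
  · rw [hA0]
    have : μ.restrict A = 0 := Measure.restrict_eq_zero.mpr hA0
    simp [this]
  -- a, b positive
  set a := (μ A).toReal with ha
  set b := (ν A).toReal with hb
  have hνA0 : ν A ≠ 0 := fun h => hA0 (hμν h)
  have ha0 : 0 < a := ENNReal.toReal_pos hA0 (measure_ne_top _ _)
  have hb0 : 0 < b := ENNReal.toReal_pos hνA0 (measure_ne_top _ _)
  set c := a / b with hc
  have hc0 : 0 < c := div_pos ha0 hb0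
  -- the auxiliary function g = (f x).toReal⁻¹
  set g : α → ℝ := fun x => ((f x).toReal)⁻¹ with hg
  have hgmeas : Measurable g := (hfmeas.ennreal_toReal).inv
  have hgnn : ∀ x, 0 ≤ g x := fun x => inv_nonneg.mpr ENNReal.toReal_nonneg
  -- lintegral bound : ∫⁻ in A, ofReal (g x) ∂μ ≤ ν A
  have hkey : ∀ x, ENNReal.ofReal (g x) * f x ≤ 1 := by
    intro x
    rcases eq_or_ne (f x) 0 with h0 | h0
    · simp [h0]
    rcases eq_or_ne (f x) ⊤ with htop | htop
    · simp [hg, htop]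
    · have hpos : 0 < (f x).toReal := ENNReal.toReal_pos h0 htop
      rw [hg]
      rw [ENNReal.ofReal_inv_of_pos hpos, ENNReal.ofReal_toReal htop]
      rw [ENNReal.inv_mul_cancel h0 htop]
  have hgl : ∫⁻ x in A, ENNReal.ofReal (g x) ∂μ ≤ ν A := by
    conv_lhs => rw [← Measure.withDensity_rnDeriv_eq μ ν hμν]
    rw [setLIntegral_withDensity_eq_setLIntegral_mul ν hfmeas
      (hgmeas.ennreal_ofReal) hA]
    calc ∫⁻ x in A, f x * ENNReal.ofReal (g x) ∂ν
        ≤ ∫⁻ _ in A, 1 ∂ν := by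
          refine lintegral_mono fun x => ?_
          rw [mul_comm]; exact hkey x
      _ = ν A := by simp
  have hgint : IntegrableOn g A μ := by
    constructor
    · exact (hgmeas.aestronglyMeasurable).restrict
    · rw [hasFiniteIntegral_iff_ofReal (Filter.Eventually.of_forall hgnn)]
      exact lt_of_le_of_lt hgl (measure_lt_top _ _)
  have hgle : ∫ x in A, g x ∂μ ≤ b := by
    rw [integral_eq_lintegral_of_nonneg_ae (Filter.Eventually.of_forall hgnn)
      (hgmeas.aestronglyMeasurable).restrict]
    exact ENNReal.toReal_mono (measure_ne_top _ _) hgl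
  -- pointwise a.e. bound
  have hae : ∀ᵐ x ∂μ, Real.log c + 1 - c * g x ≤ Real.log (f x).toReal := by
    filter_upwards [Measure.rnDeriv_pos hμν, hμν.ae_le (Measure.rnDeriv_lt_top μ ν)]
      with x hx1 hx2
    have hy : 0 < (f x).toReal := ENNReal.toReal_pos hx1.ne' hx2.ne
    have h1 : Real.log (c / (f x).toReal) ≤ c / (f x).toReal - 1 :=
      Real.log_le_sub_one_of_pos (div_pos hc0 hy)
    rw [Real.log_div hc0.ne' hy.ne'] at h1
    have hgx : c * g x = c / (f x).toReal := by
      rw [hg]; simp [div_eq_mul_inv]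
    linarith
  -- integrate
  have hint1 : Integrable (fun x => Real.log c + 1 - c * g x) (μ.restrict A) := by
    exact (integrable_const _).sub (hgint.const_mul c)
  have hmono : ∫ x in A, (Real.log c + 1 - c * g x) ∂μ
      ≤ ∫ x in A, Real.log (f x).toReal ∂μ :=
    integral_mono_ae hint1 (hint.restrict) (ae_restrict_of_ae hae)
  have hcomp : ∫ x in A, (Real.log c + 1 - c * g x) ∂μ
      = (Real.log c + 1) * a - c * ∫ x in A, g x ∂μ := by
    rw [integral_sub (integrable_const _) (hgint.const_mul c)]
    rw [integral_const, integral_const_mul]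
    rw [measureReal_restrict_apply_univ]
    simp [ha, smul_eq_mul, mul_comm, Measure.real]
  have : a * Real.log c ≤ ∫ x in A, (Real.log c + 1 - c * g x) ∂μ := by
    rw [hcomp]
    have h2 : c * ∫ x in A, g x ∂μ ≤ c * b := by
      exact mul_le_mul_of_nonneg_left hgle hc0.le
    have hcb : c * b = a := by rw [hc]; exact div_mul_cancel₀ a hb0.ne'
    nlinarith
  linarith


lemma binent_ge {a : ℝ} (h0 : 0 ≤ a) (h1 : a ≤ 1) :
    -Real.log 2 ≤ a * Real.log a + (1 - a) * Real.log (1 - a) := by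
  have hl2 : 0 < Real.log 2 := Real.log_pos (by norm_num)
  rcases eq_or_lt_of_le h0 with h|h0'
  · simp [← h]; linarith
  rcases eq_or_lt_of_le h1 with h|h1'
  · simp [h]; linarith
  have ha1 : 0 < 1 - a := by linarith
  have e1 : a - 1/2 ≤ a * Real.log (2*a) := by
    have h := log_ge_one_sub_inv (x := 2*a) (by linarith)
    have h2 : a * (1 - (2*a)⁻¹) ≤ a * Real.log (2*a) :=
      mul_le_mul_of_nonneg_left h h0'.le
    have hinv : a * (2*a)⁻¹ = 1/2 := by field_simp
    nlinarith
  have e2 : (1-a) - 1/2 ≤ (1-a) * Real.log (2*(1-a)) := by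
    have h := log_ge_one_sub_inv (x := 2*(1-a)) (by linarith)
    have h2 : (1-a) * (1 - (2*(1-a))⁻¹) ≤ (1-a) * Real.log (2*(1-a)) :=
      mul_le_mul_of_nonneg_left h ha1.le
    have hinv : (1-a) * (2*(1-a))⁻¹ = 1/2 := by field_simp
    nlinarith
  rw [Real.log_mul (by norm_num) h0'.ne'] at e1
  rw [Real.log_mul (by norm_num) ha1.ne'] at e2
  nlinarith

end AuxLemmas

set_option maxHeartbeats 1000000 in
theorem covering_nonuniform_aux (n N N₂ : ℕ) (hN₂ : 0 < N₂)
    (S : Finset (EucSp n)) (hcard : S.card = N)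
    (Q : Measure (EucSp n)) (hQprob : IsProbabilityMeasure Q)
    (hQsupp : Q (↑S)ᶜ = 0)
    (hquant : ∀ u ∈ S, ∃ j : ℕ, Q {u} = (j : ℝ≥0∞) / (N₂ : ℝ≥0∞))
    (μ : Measure (EucSp n × EucSp n)) (hμ : IsProbabilityMeasure μ)
    (hmarg : μ.map Prod.fst = Q)
    (D : Set (EucSp n)) (hD : D.Countable) (hsupp : (μ.map Prod.snd) Dᶜ = 0)
    (ε δ : ℝ)
    (herr : ENNReal.ofReal (1 - δ) ≤ μ {q | ‖q.1 - q.2‖ ≤ ε}) :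
    ∀ τ : ℝ, 0 < τ → τ < 1 →
      ENNReal.ofReal (τ * (1 - δ) * Real.logb 2 (covNum Q (2 * ε) (τ + δ)))
        ≤ mutualInfoBits μ + ENNReal.ofReal 2 := by
  intro τ hτ0 hτ1
  haveI := hQprob
  haveI := hμ
  classical
  set t := covNum Q (2 * ε) (τ + δ) with htdef
  clear_value t
  by_cases ht2 : 2 ≤ t
  swap
  · have ht01 : t = 0 ∨ t = 1 := by omega
    have hlog : Real.logb 2 (t : ℝ) = 0 := by
      rcases ht01 with h | h <;> rw [h] <;> simp
    rw [hlog, mul_zero, ENNReal.ofReal_zero]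
    exact zero_le
  -- basic scalar facts
  have hτδ : 0 < 1 - (τ + δ) := by
    by_contra hcon
    push_neg at hcon
    have h0 : 0 ∈ {k : ℕ | ∃ s : Finset (EucSp n), s.card = k ∧
        ENNReal.ofReal (1 - (τ + δ)) ≤ Q (⋃ x ∈ s, Metric.closedBall x (2 * ε))} := by
      refine ⟨∅, Finset.card_empty, ?_⟩
      rw [ENNReal.ofReal_eq_zero.mpr hcon]
      exact zero_le
    have ht0 : covNum Q (2 * ε) (τ + δ) ≤ 0 := Nat.sInf_le h0
    rw [← htdef] at ht0
    omega
  have hδ0 : 0 ≤ δ := by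
    have h1 := herr.trans prob_le_one
    rw [ENNReal.ofReal_le_one] at h1
    linarith
  have hδ1 : δ < 1 := by linarith
  -- S is nonempty
  have hSne : S.Nonempty := by
    rw [Finset.nonempty_iff_ne_empty]
    intro h
    rw [h] at hQsupp
    have h1 : (1 : ℝ≥0∞) = 0 := by
      rw [← measure_univ (μ := Q)]
      simpa using hQsupp
    exact one_ne_zero h1
  -- greedy construction of covering balls
  have hpick : ∀ T : Set (EucSp n), ∃ u, u ∈ S ∧ ∀ v ∈ S,
      Q (Metric.closedBall v (2 * ε) \ T) ≤ Q (Metric.closedBall u (2 * ε) \ T) := by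
    intro T
    obtain ⟨u, hu, hmax⟩ := S.exists_max_image
      (fun u => Q (Metric.closedBall u (2 * ε) \ T)) hSne
    exact ⟨u, hu, hmax⟩
  choose pick hpickS hpickMax using hpick
  set C : ℕ → Set (EucSp n) :=
    fun k => Nat.rec ∅ (fun _ Ck => Ck ∪ Metric.closedBall (pick Ck) (2 * ε)) k with hCdef
  have hC0 : C 0 = ∅ := rfl
  have hCsucc : ∀ k, C (k + 1) = C k ∪ Metric.closedBall (pick (C k)) (2 * ε) := fun k => rfl
  have hCmeas : ∀ k, MeasurableSet (C k) := by
    intro k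
    induction k with
    | zero => exact MeasurableSet.empty
    | succ k ih =>
      rw [hCsucc k]
      exact ih.union measurableSet_closedBall
  set m : ℕ → ℝ≥0∞ := fun k => Q (Metric.closedBall (pick (C k)) (2 * ε) \ C k) with hmdef
  have hmmax : ∀ k, ∀ u ∈ S, Q (Metric.closedBall u (2 * ε) \ C k) ≤ m k :=
    fun k => hpickMax (C k)
  have hmanti : Antitone m := by
    refine antitone_nat_of_succ_le fun k => ?_
    calc m (k + 1) ≤ Q (Metric.closedBall (pick (C (k + 1))) (2 * ε) \ C k) := by
          refine measure_mono (Set.diff_subset_diff_right ?_)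
          rw [hCsucc k]
          exact Set.subset_union_left
      _ ≤ m k := hmmax k _ (hpickS _)
  have hsum : ∀ k, ∑ i ∈ Finset.range k, m i = Q (C k) := by
    intro k
    induction k with
    | zero => simp [hC0]
    | succ k ih =>
      rw [Finset.sum_range_succ, ih, hCsucc k, ← Set.union_diff_self,
        measure_union Set.disjoint_sdiff_right
          (measurableSet_closedBall.diff (hCmeas k))]
  set K := t - 1 with hKdef
  have hK1 : 1 ≤ K := by omega
  have hKne : (K : ℝ≥0∞) ≠ 0 := Nat.cast_ne_zero.mpr (by omega)
  -- the greedy union is a union of at most K balls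
  have hsub : ∀ k, C k ⊆
      ⋃ x ∈ (Finset.range k).image (fun i => pick (C i)), Metric.closedBall x (2 * ε) := by
    intro k
    induction k with
    | zero => rw [hC0]; exact Set.empty_subset _
    | succ k ih =>
      rw [hCsucc k]
      refine Set.union_subset (ih.trans ?_) ?_
      · refine Set.iUnion₂_subset fun x hx => ?_
        refine Set.subset_iUnion₂ (s := fun x _ => Metric.closedBall x (2 * ε)) x ?_
        simp only [Finset.mem_image, Finset.mem_range] at hx ⊢
        obtain ⟨i, hi, hix⟩ := hx
        exact ⟨i, by omega, hix⟩
      · refine Set.subset_iUnion₂ (s := fun x _ => Metric.closedBall x (2 * ε)) (pick (C k)) ?_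
        simp only [Finset.mem_image, Finset.mem_range]
        exact ⟨k, by omega, rfl⟩
  -- the greedy union cannot capture mass 1 - (τ + δ)
  have hQCK : Q (C K) < ENNReal.ofReal (1 - (τ + δ)) := by
    by_contra hcon
    push_neg at hcon
    have hmem : ((Finset.range K).image (fun i => pick (C i))).card ∈
        {k : ℕ | ∃ s : Finset (EucSp n), s.card = k ∧
          ENNReal.ofReal (1 - (τ + δ)) ≤ Q (⋃ x ∈ s, Metric.closedBall x (2 * ε))} :=
      ⟨_, rfl, hcon.trans (measure_mono (hsub K))⟩
    have h1 : covNum Q (2 * ε) (τ + δ) ≤ ((Finset.range K).image (fun i => pick (C i))).card :=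
      Nat.sInf_le hmem
    rw [← htdef] at h1
    have h2 : ((Finset.range K).image (fun i => pick (C i))).card ≤ K :=
      Finset.card_image_le.trans (by simp)
    omega
  -- the K-th increment is at most 1/K
  have hmK : m K ≤ 1 / (K : ℝ≥0∞) := by
    rw [ENNReal.le_div_iff_mul_le (Or.inl hKne) (Or.inl (ENNReal.natCast_ne_top K))]
    calc m K * K = ∑ _i ∈ Finset.range K, m K := by
          simp [Finset.sum_const, nsmul_eq_mul, mul_comm]
      _ ≤ ∑ i ∈ Finset.range K, m i :=
          Finset.sum_le_sum fun i hi => hmanti (Finset.mem_range.mp hi).le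
      _ = Q (C K) := hsum K
      _ ≤ 1 := prob_le_one
  -- the marginals and the good event
  set r := μ.map Prod.snd with hr
  haveI : IsProbabilityMeasure r := by
    rw [hr]; exact Measure.isProbabilityMeasure_map measurable_snd.aemeasurable
  set ν := Q.prod r with hν
  haveI : IsProbabilityMeasure ν := by rw [hν]; infer_instance
  set A : Set (EucSp n × EucSp n) := {p | ‖p.1 - p.2‖ ≤ ε} ∩ (Prod.fst ⁻¹' (C K)ᶜ) with hAdef
  have hE1meas : MeasurableSet {p : EucSp n × EucSp n | ‖p.1 - p.2‖ ≤ ε} := by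
    have hcont : Continuous fun p : EucSp n × EucSp n => ‖p.1 - p.2‖ :=
      (continuous_fst.sub continuous_snd).norm
    exact measurableSet_le hcont.measurable measurable_const
  have hAmeas : MeasurableSet A := hE1meas.inter ((hCmeas K).compl.preimage measurable_fst)
  -- μ A ≥ τ
  have hμA : ENNReal.ofReal τ ≤ μ A := by
    have hs : {q : EucSp n × EucSp n | ‖q.1 - q.2‖ ≤ ε} ⊆ A ∪ Prod.fst ⁻¹' (C K) := by
      intro p hp
      by_cases hpC : p.1 ∈ C K
      · exact Or.inr hpC
      · exact Or.inl ⟨hp, hpC⟩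
    have h2 : μ (Prod.fst ⁻¹' (C K)) = Q (C K) := by
      rw [← hmarg, Measure.map_apply measurable_fst (hCmeas K)]
    have h1 : ENNReal.ofReal (1 - δ) ≤ μ A + Q (C K) :=
      herr.trans (((measure_mono hs).trans (measure_union_le _ _)).trans (by rw [h2]))
    have h3 : ENNReal.ofReal (1 - δ) ≤ μ A + ENNReal.ofReal (1 - (τ + δ)) :=
      h1.trans (add_le_add le_rfl hQCK.le)
    have h4 : ENNReal.ofReal (1 - δ) - ENNReal.ofReal (1 - (τ + δ)) ≤ μ A :=
      tsub_le_iff_right.mpr h3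
    calc ENNReal.ofReal τ = ENNReal.ofReal ((1 - δ) - (1 - (τ + δ))) := by norm_num
      _ = ENNReal.ofReal (1 - δ) - ENNReal.ofReal (1 - (τ + δ)) :=
          ENNReal.ofReal_sub _ (by linarith)
      _ ≤ μ A := h4
  -- ν A ≤ 1 / K
  have hνA : ν A ≤ 1 / (K : ℝ≥0∞) := by
    rw [hν, Measure.prod_apply_symm hAmeas]
    have hpt : ∀ y, Q ((fun x => (x, y)) ⁻¹' A) ≤ m K := by
      intro y
      have hpre : ((fun x => (x, y)) ⁻¹' A) = {x | ‖x - y‖ ≤ ε} ∩ (C K)ᶜ := by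
        rw [hAdef]
        rfl
      rw [hpre]
      by_cases hex : ∃ u ∈ S, ‖u - y‖ ≤ ε
      · obtain ⟨u, huS, huy⟩ := hex
        refine (measure_mono ?_).trans (hmmax K u huS)
        rintro x ⟨hx1, hx2⟩
        refine ⟨?_, hx2⟩
        have hd1 : dist x y ≤ ε := by rw [dist_eq_norm]; exact hx1
        have hd2 : dist u y ≤ ε := by rw [dist_eq_norm]; exact huy
        rw [Metric.mem_closedBall]
        calc dist x u ≤ dist x y + dist y u := dist_triangle x y u
          _ ≤ ε + ε := add_le_add hd1 (by rw [dist_comm]; exact hd2)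
          _ = 2 * ε := by ring
      · refine (measure_mono (show _ ⊆ (↑S : Set (EucSp n))ᶜ from ?_)).trans ?_
        · rintro x ⟨hx1, _⟩ hxS
          exact hex ⟨x, hxS, hx1⟩
        · rw [hQsupp]
          exact zero_le
    calc ∫⁻ y, Q ((fun x => (x, y)) ⁻¹' A) ∂r ≤ ∫⁻ _, m K ∂r := lintegral_mono hpt
      _ = m K := by simp
      _ ≤ 1 / (K : ℝ≥0∞) := hmK
  -- unfold mutual information
  rw [mutualInfoBits, mutualInfoE, hmarg, ← hr, ← hν, klDivE]
  split_ifs with hif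
  swap
  · rw [ENNReal.top_div_of_ne_top ENNReal.ofReal_ne_top]
    exact le_top
  obtain ⟨hac, hint⟩ := hif
  -- apply the key integral bound
  have hAbound := setIntegral_log_rnDeriv_ge μ ν hac hint hAmeas
  have hAcbound := setIntegral_log_rnDeriv_ge μ ν hac hint hAmeas.compl
  have huniv := setIntegral_log_rnDeriv_ge μ ν hac hint MeasurableSet.univ
  have hsplitI0 : (∫ x in A, Real.log (μ.rnDeriv ν x).toReal ∂μ)
      + ∫ x in Aᶜ, Real.log (μ.rnDeriv ν x).toReal ∂μ
      = ∫ x, Real.log (μ.rnDeriv ν x).toReal ∂μ :=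
    integral_add_compl hAmeas hint
  set I := ∫ x, Real.log (μ.rnDeriv ν x).toReal ∂μ with hI
  -- real quantities
  set a := (μ A).toReal with haa
  set b := (ν A).toReal with hbb
  have ha1 : a ≤ 1 := by
    rw [haa]
    calc (μ A).toReal ≤ (1 : ℝ≥0∞).toReal := ENNReal.toReal_mono one_ne_top prob_le_one
      _ = 1 := by simp
  have haτ : τ ≤ a :=
    (ENNReal.ofReal_le_iff_le_toReal (measure_ne_top μ A)).mp hμA
  have ha0 : 0 < a := lt_of_lt_of_le hτ0 haτ
  have hb1K : b ≤ 1 / (K : ℝ) := by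
    have h1 : (ν A).toReal ≤ ((1 : ℝ≥0∞) / (K : ℝ≥0∞)).toReal :=
      ENNReal.toReal_mono (by simp [ENNReal.div_eq_top, hKne]) hνA
    rwa [ENNReal.toReal_div, ENNReal.toReal_one, ENNReal.toReal_natCast] at h1
  have hb0 : 0 < b := by
    refine ENNReal.toReal_pos (fun h0 => ?_) (measure_ne_top _ _)
    have h1 := hac h0
    rw [haa, h1] at haτ
    simp at haτ
    linarith
  have hcompl : (μ Aᶜ).toReal = 1 - a := by
    rw [prob_compl_eq_one_sub hAmeas, ENNReal.toReal_sub_of_le prob_le_one one_ne_top]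
    simp [haa]
  have hsplitI := hsplitI0
  have hI0 : 0 ≤ I := by
    rw [setIntegral_univ] at huniv
    simpa using huniv
  -- lower bound the complement term
  have hbc1 : (ν Aᶜ).toReal ≤ 1 := by
    calc (ν Aᶜ).toReal ≤ (1 : ℝ≥0∞).toReal := ENNReal.toReal_mono one_ne_top prob_le_one
      _ = 1 := by simp
  have hAc2 : (1 - a) * Real.log (1 - a)
      ≤ ∫ x in Aᶜ, Real.log (μ.rnDeriv ν x).toReal ∂μ := by
    rcases eq_or_lt_of_le (show (0:ℝ) ≤ 1 - a by linarith) with h|h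
    · refine le_trans ?_ hAcbound
      rw [hcompl, ← h]
      simp
    · have hbc0 : 0 < (ν Aᶜ).toReal := by
        refine ENNReal.toReal_pos (fun h0 => ?_) (measure_ne_top _ _)
        have h1 := hac h0
        rw [h1] at hcompl
        simp at hcompl
        linarith
      refine le_trans ?_ hAcbound
      rw [hcompl]
      refine mul_le_mul_of_nonneg_left ?_ h.le
      refine Real.log_le_log h ?_
      rw [le_div_iff₀ hbc0]
      nlinarith
  -- lower bound the main term
  have hmain : a * Real.log a - a * Real.log b
      ≤ ∫ x in A, Real.log (μ.rnDeriv ν x).toReal ∂μ := by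
    refine le_trans ?_ hAbound
    rw [Real.log_div ha0.ne' hb0.ne']
    ring_nf
    exact le_refl _
  have hbinent := binent_ge ha0.le ha1
  -- log b ≤ - log K
  have hKR1 : (1:ℝ) ≤ (K : ℝ) := by exact_mod_cast hK1
  have hlogb : Real.log b ≤ -Real.log (K : ℝ) := by
    have h1 : Real.log b ≤ Real.log (1 / (K : ℝ)) := Real.log_le_log hb0 hb1K
    rwa [one_div, Real.log_inv] at h1
  have hlogK0 : 0 ≤ Real.log (K : ℝ) := Real.log_nonneg hKR1
  have hlin3 : τ * Real.log (K : ℝ) ≤ a * (-Real.log b) :=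
    mul_le_mul haτ (by linarith) hlogK0 (by linarith)
  have hIbound : τ * Real.log (K : ℝ) - Real.log 2 ≤ I := by
    nlinarith [hmain, hAc2, hbinent, hsplitI, hlin3]
  -- final real arithmetic
  have hlog2 : 0 < Real.log 2 := Real.log_pos one_lt_two
  rw [← ENNReal.ofReal_div_of_pos hlog2,
    ← ENNReal.ofReal_add (div_nonneg hI0 hlog2.le) (by norm_num)]
  apply ENNReal.ofReal_le_ofReal
  have hlogt0 : 0 ≤ Real.log (t : ℝ) :=
    Real.log_nonneg (by exact_mod_cast (by omega : 1 ≤ t))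
  have hKlog : Real.log (t : ℝ) ≤ Real.log 2 + Real.log (K : ℝ) := by
    have h2K : (t : ℝ) ≤ 2 * (K : ℝ) := by exact_mod_cast (by omega : t ≤ 2 * K)
    have h3 := Real.log_le_log (by exact_mod_cast (by omega : 0 < t)) h2K
    rwa [Real.log_mul (by norm_num) (by linarith)] at h3
  have hkey : τ * (1 - δ) * Real.log (t : ℝ) ≤ I + 2 * Real.log 2 := by
    have h1 : τ * (1 - δ) * Real.log (t : ℝ) ≤ τ * Real.log (t : ℝ) := by
      have hττ : τ * (1 - δ) ≤ τ := by nlinarith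
      exact mul_le_mul_of_nonneg_right hττ hlogt0
    have h2 : τ * Real.log (t : ℝ) ≤ τ * (Real.log 2 + Real.log (K : ℝ)) :=
      mul_le_mul_of_nonneg_left hKlog hτ0.le
    nlinarith [hIbound, hlog2]
  rw [Real.logb]
  calc τ * (1 - δ) * (Real.log (t : ℝ) / Real.log 2)
      = (τ * (1 - δ) * Real.log (t : ℝ)) / Real.log 2 := by ring
    _ ≤ (I + 2 * Real.log 2) / Real.log 2 := by
        exact div_le_div_of_nonneg_right hkey hlog2.le
    _ = I / Real.log 2 + 2 := by field_simp



/-- **Fano-type covering bound, quantized case** (`lemma: covering nonuniform`).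
`x ∼ Q`, a distribution on `N` points whose probabilities are integer multiples of
`α = 1/N₂`; `x̂` takes countably many values, and `Pr[‖x - x̂‖ ≤ ε] ≥ 1 - δ`.  Then for all
`τ ∈ (0,1)`:  `τ (1-δ) log cov_{2ε, τ+δ}(Q) ≤ I(x; x̂) + 2` (information in bits). -/
theorem covering_nonuniform (n N N₂ : ℕ) (hN₂ : 0 < N₂)
    (S : Finset (EucSp n)) (hcard : S.card = N)
    (Q : Measure (EucSp n)) (hQprob : IsProbabilityMeasure Q)
    (hQsupp : Q (↑S)ᶜ = 0)
    (hquant : ∀ u ∈ S, ∃ j : ℕ, Q {u} = (j : ℝ≥0∞) / (N₂ : ℝ≥0∞))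
    (μ : Measure (EucSp n × EucSp n)) (hμ : IsProbabilityMeasure μ)
    (hmarg : μ.map Prod.fst = Q)
    (D : Set (EucSp n)) (hD : D.Countable) (hsupp : (μ.map Prod.snd) Dᶜ = 0)
    (ε δ : ℝ)
    (herr : ENNReal.ofReal (1 - δ) ≤ μ {q | ‖q.1 - q.2‖ ≤ ε}) :
    ∀ τ : ℝ, 0 < τ → τ < 1 →
      ENNReal.ofReal (τ * (1 - δ) * Real.logb 2 (covNum Q (2 * ε) (τ + δ)))
        ≤ mutualInfoBits μ + ENNReal.ofReal 2 :=
  covering_nonuniform_aux n N N₂ hN₂ S hcard Q hQprob hQsupp hquant μ hμ hmarg D hD hsupp ε δ herr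

end
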